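/- Let N ≥ 1 and let 0 ≤ m_1 < m_2 < … < m_N < d be natural numbers, and let V ⊆ ℂ[x] be the ℂ-linear span of the N+1 polynomials P_{m_1;d}, …, P_{m_N;d}, (x+1)^d. Then the set of root multiplicities at −1 of the nonzero elements of V is exactly {0, 1, …, N−1} ∪ {d}. -/

import Mathlib

open Polynomial

/-- The truncated binomial `P_{k;d}(x) = ∑_{i=0}^{k} (d choose i) x^i` as a complex
polynomial. -/
noncomputable def truncBinom (d k : ℕ) : Polynomial ℂ :=
  ∑ i ∈ Finset.range (k + 1), Polynomial.C (Nat.choose d i : ℂ) * Polynomial.X ^ i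

namespace TruncAux

/-- The operator `L f = (X+1) f' - d f`. -/
noncomputable def Lop (d : ℕ) : Polynomial ℂ →ₗ[ℂ] Polynomial ℂ where
  toFun f := (X + 1) * derivative f - C (d : ℂ) * f
  map_add' f g := by rw [derivative_add]; ring
  map_smul' a f := by
    simp only [derivative_smul, smul_eq_C_mul, RingHom.id_apply, derivative_C_mul]
    ring

lemma Lop_apply (d : ℕ) (f : Polynomial ℂ) :
    Lop d f = (X + 1) * derivative f - C (d : ℂ) * f := rfl

lemma Lop_pow (d : ℕ) : Lop d ((X + 1) ^ d : Polynomial ℂ) = 0 := by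
  cases d with
  | zero => simp [Lop_apply]
  | succ n =>
      rw [Lop_apply, derivative_pow]
      simp only [derivative_add, derivative_X, derivative_one, add_zero, Nat.succ_sub_one]
      push_cast
      ring

lemma truncBinom_zero (d : ℕ) : truncBinom d 0 = 1 := by
  simp [truncBinom]

lemma truncBinom_succ (d k : ℕ) :
    truncBinom d (k + 1) = truncBinom d k + C ((d.choose (k + 1) : ℂ)) * X ^ (k + 1) := by
  rw [truncBinom, Finset.sum_range_succ]; rfl

lemma Lop_truncBinom (d k : ℕ) :
    Lop d (truncBinom d k) = -C ((d : ℂ) * ((d - 1).choose k)) * X ^ k := by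
  have h1 : ∀ j : ℕ, ((d : ℂ) * ((d - 1).choose j)) = (d.choose (j + 1) : ℂ) * ((j : ℂ) + 1) := by
    intro j
    have h : d * (d - 1).choose j = d.choose (j + 1) * (j + 1) := by
      cases d with
      | zero => simp
      | succ n => simpa using Nat.add_one_mul_choose_eq n j
    exact_mod_cast h
  induction k with
  | zero =>
      rw [truncBinom_zero]
      simp [Lop_apply]
  | succ k ih =>
      rw [truncBinom_succ, map_add, ih]
      rw [Lop_apply, derivative_C_mul, derivative_X_pow]
      have e1 : (C ((d : ℂ) * ((d - 1).choose k)) : Polynomial ℂ)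
          = C ((d.choose (k + 1) : ℂ) * ((k : ℂ) + 1)) := by
        rw [h1 k]
      have e2 : (C ((d : ℂ) * ((d - 1).choose (k + 1))) : Polynomial ℂ)
          = C ((d : ℂ) * (d.choose (k + 1) : ℂ) - (d.choose (k + 1) : ℂ) * ((k : ℂ) + 1)) := by
        congr 1
        cases d with
        | zero => simp [Nat.choose_eq_zero_of_lt]
        | succ n =>
            have hp : (((n + 1).choose (k + 1) : ℕ) : ℂ)
                = ((n.choose k : ℕ) : ℂ) + ((n.choose (k + 1) : ℕ) : ℂ) := by
              exact_mod_cast Nat.choose_succ_succ n k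
            have h := h1 k
            simp only [Nat.succ_sub_one] at h ⊢
            push_cast at h hp ⊢
            linear_combination (-((n : ℂ) + 1)) * hp - h
      rw [e1, e2]
      simp only [Nat.add_sub_cancel, Nat.cast_add, Nat.cast_one, C_add, C_mul, C_sub, C_neg, C_1]
      ring


lemma coeff_sum_single {n : ℕ} (e : Fin n → ℕ) (he : Function.Injective e)
    (b : Fin n → ℂ) (j : Fin n) :
    (∑ i, C (b i) * X ^ (e i)).coeff (e j) = b j := by
  rw [finset_sum_coeff, Finset.sum_eq_single j]
  · simp [coeff_C_mul, coeff_X_pow]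
  · intro i _ hij
    have : e j ≠ e i := fun h => hij (he h.symm)
    simp [coeff_C_mul, coeff_X_pow, this]
  · simp

lemma sparse_mult_lt : ∀ (n : ℕ) (e : Fin n → ℕ), StrictMono e → ∀ b : Fin n → ℂ,
    (∑ i, C (b i) * X ^ (e i)) ≠ 0 →
    rootMultiplicity (-1) (∑ i, C (b i) * X ^ (e i)) < n := by
  intro n
  induction n with
  | zero => intro e he b h; simp at h
  | succ n ih =>
    intro e he b hne
    set q : Polynomial ℂ := ∑ i, C (b i) * X ^ (e i - e 0) with hq
    have hfac : (∑ i, C (b i) * X ^ (e i)) = X ^ (e 0) * q := by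
      rw [hq, Finset.mul_sum]
      refine Finset.sum_congr rfl fun i _ => ?_
      have h0i : e 0 ≤ e i := he.monotone (Fin.zero_le i)
      rw [mul_left_comm, ← pow_add, show e 0 + (e i - e 0) = e i by omega]
    have hq0 : q ≠ 0 := by
      intro h; rw [hfac, h, mul_zero] at hne; exact hne rfl
    have hXroot : rootMultiplicity (-1 : ℂ) (X ^ e 0) = 0 := by
      apply rootMultiplicity_eq_zero
      simp [IsRoot]
    have hmul : rootMultiplicity (-1 : ℂ) (∑ i, C (b i) * X ^ (e i))
        = rootMultiplicity (-1) q := by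
      rw [hfac, rootMultiplicity_mul (by rwa [← hfac]), hXroot, zero_add]
    rw [hmul]
    by_cases hder : derivative q = 0
    · have h0 : q.natDegree = 0 := natDegree_eq_zero_of_derivative_eq_zero hder
      obtain ⟨c, hc⟩ := Polynomial.natDegree_eq_zero.mp h0
      have hc0 : c ≠ 0 := fun h => hq0 (by rw [← hc, h, map_zero])
      rw [← hc, rootMultiplicity_C]
      exact Nat.succ_pos n
    · have hdq : derivative q
          = ∑ i : Fin n, C (b i.succ * ((e i.succ - e 0 : ℕ) : ℂ)) * X ^ (e i.succ - e 0 - 1) := by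
        rw [hq, map_sum, Fin.sum_univ_succ]
        simp only [Nat.sub_self, pow_zero, mul_one, derivative_C, zero_add]
        refine Finset.sum_congr rfl fun i _ => ?_
        rw [derivative_C_mul, derivative_X_pow, ← mul_assoc, ← C_mul]
      have he' : StrictMono (fun i : Fin n => e i.succ - e 0 - 1) := by
        intro i j hij
        have h1 : e 0 < e i.succ := he (Fin.succ_pos i)
        have h2 : e i.succ < e j.succ := he (Fin.succ_lt_succ_iff.mpr hij)
        show e i.succ - e 0 - 1 < e j.succ - e 0 - 1
        omega
      have := ih (fun i => e i.succ - e 0 - 1) he'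
        (fun i => b i.succ * ((e i.succ - e 0 : ℕ) : ℂ)) (by rw [← hdq]; exact hder)
      rw [← hdq] at this
      have hle := Polynomial.rootMultiplicity_sub_one_le_derivative_rootMultiplicity q (-1)
      omega

lemma Lop_mult {d : ℕ} {f : Polynomial ℂ} (hf : f ≠ 0)
    (h : rootMultiplicity (-1) f < d) :
    Lop d f ≠ 0 ∧ rootMultiplicity (-1) (Lop d f) = rootMultiplicity (-1) f := by
  have hX1 : (X - C (-1 : ℂ) : Polynomial ℂ) = X + 1 := by
    rw [map_neg, C_1, sub_neg_eq_add]
  set k := rootMultiplicity (-1 : ℂ) f with hk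
  set g := f /ₘ (X - C (-1 : ℂ)) ^ k with hg
  have hfg : (X - C (-1 : ℂ)) ^ k * g = f := pow_mul_divByMonic_rootMultiplicity_eq f (-1)
  have hgev : eval (-1 : ℂ) g ≠ 0 := eval_divByMonic_pow_rootMultiplicity_ne_zero (-1) hf
  set h₀ : Polynomial ℂ := C ((k : ℂ) - d) * g + (X + 1) * derivative g with hh
  have hev : eval (-1 : ℂ) h₀ ≠ 0 := by
    rw [hh]
    simp only [eval_add, eval_mul, eval_C, eval_X, eval_one]
    rw [show (-1 : ℂ) + 1 = 0 by ring, zero_mul, add_zero]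
    exact mul_ne_zero (sub_ne_zero.mpr (by exact_mod_cast h.ne)) hgev
  have hh0 : h₀ ≠ 0 := fun h' => hev (by rw [h', eval_zero])
  have hcomp : Lop d f = (X + 1) ^ k * h₀ := by
    rw [← hfg, hX1, Lop_apply, hh]
    cases k with
    | zero => simp only [Nat.cast_zero, zero_sub, C_neg, pow_zero, one_mul]; ring
    | succ k' =>
        rw [derivative_mul, derivative_pow]
        simp only [derivative_add, derivative_X, derivative_one, add_zero, Nat.succ_sub_one,
          mul_one]
        rw [map_sub]
        ring
  have hXk : rootMultiplicity (-1 : ℂ) ((X + 1 : Polynomial ℂ) ^ k) = k := by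
    rw [← hX1, rootMultiplicity_X_sub_C_pow]
  have hne : Lop d f ≠ 0 := by
    rw [hcomp]
    exact mul_ne_zero (pow_ne_zero _ (by rw [← hX1]; exact X_sub_C_ne_zero (-1))) hh0
  refine ⟨hne, ?_⟩
  rw [hcomp, rootMultiplicity_mul (by rw [← hcomp]; exact hne), hXk,
    rootMultiplicity_eq_zero (fun hr => hev hr), add_zero]


lemma truncBinom_degree_le (d k : ℕ) : (truncBinom d k).degree ≤ (k : ℕ) := by
  refine (degree_sum_le _ _).trans (Finset.sup_le fun i hi => ?_)
  refine (degree_C_mul_X_pow_le _ _).trans ?_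
  exact_mod_cast Nat.le_of_lt_succ (Finset.mem_range.mp hi)

lemma key {N d : ℕ} (hd : 1 ≤ d) {m : Fin N → ℕ} (hmono : StrictMono m) (hlt : ∀ i, m i < d)
    {c : Fin N → ℂ} {g f : Polynomial ℂ} (hLg : Lop d g = 0) (hdg : g.degree ≤ (d : ℕ))
    (hf : f = ∑ i, c i • truncBinom d (m i) + g) (hc : c ≠ 0) :
    f ≠ 0 ∧ rootMultiplicity (-1) f < N := by
  set b : Fin N → ℂ := fun i => -(c i * ((d : ℂ) * ((d - 1).choose (m i)))) with hb
  have hLf : Lop d f = ∑ i, C (b i) * X ^ (m i) := by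
    rw [hf, map_add, hLg, add_zero, map_sum]
    refine Finset.sum_congr rfl fun i _ => ?_
    rw [map_smul, Lop_truncBinom, hb, smul_eq_C_mul]
    simp only [C_neg, C_mul]
    ring
  obtain ⟨i₀, hi₀⟩ : ∃ i, c i ≠ 0 := by
    by_contra h; push_neg at h; exact hc (funext fun i => h i)
  have hb₀ : b i₀ ≠ 0 := by
    rw [hb]
    simp only [neg_ne_zero]
    refine mul_ne_zero hi₀ (mul_ne_zero ?_ ?_)
    · have hd0 : d ≠ 0 := by omega
      exact_mod_cast hd0
    · have : 0 < (d - 1).choose (m i₀) := Nat.choose_pos (by have := hlt i₀; omega)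
      exact_mod_cast this.ne'
  have hLne : Lop d f ≠ 0 := by
    intro h0
    have hcs := coeff_sum_single m hmono.injective b i₀
    rw [← hLf, h0, coeff_zero] at hcs
    exact hb₀ hcs.symm
  have hfne : f ≠ 0 := fun h => hLne (by rw [h, map_zero])
  have hmlt : rootMultiplicity (-1) (Lop d f) < N := by
    rw [hLf]; exact sparse_mult_lt N m hmono b (by rw [← hLf]; exact hLne)
  have hX1 : (X - C (-1 : ℂ)) = X + 1 := by rw [map_neg, C_1, sub_neg_eq_add]
  have hmd : rootMultiplicity (-1) f < d := by
    by_contra hge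
    push_neg at hge
    obtain ⟨w, hw⟩ : (X - C (-1 : ℂ)) ^ d ∣ f := (le_rootMultiplicity_iff hfne).mp hge
    have hw0 : w ≠ 0 := fun h => hfne (by rw [hw, h, mul_zero])
    have hdegf : f.degree ≤ (d : ℕ) := by
      rw [hf]
      refine (degree_add_le _ _).trans (max_le ?_ hdg)
      refine (degree_sum_le _ _).trans (Finset.sup_le fun i _ => ?_)
      refine (degree_smul_le _ _).trans ((truncBinom_degree_le d (m i)).trans ?_)
      exact_mod_cast (hlt i).le
    have hpne : ((X - C (-1 : ℂ)) ^ d) ≠ 0 := pow_ne_zero _ (X_sub_C_ne_zero _)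
    have hnf : f.natDegree ≤ d := natDegree_le_iff_degree_le.mpr hdegf
    have hnd : f.natDegree = d + w.natDegree := by
      rw [hw, natDegree_mul hpne hw0, natDegree_pow, natDegree_X_sub_C, mul_one]
    obtain ⟨a, ha⟩ := natDegree_eq_zero.mp (show w.natDegree = 0 by omega)
    have hfa : f = a • ((X + 1) ^ d : Polynomial ℂ) := by
      rw [hw, hX1, ← ha, smul_eq_C_mul]; ring
    exact hLne (by rw [hfa, map_smul, Lop_pow, smul_zero])
  refine ⟨hfne, ?_⟩
  rw [← (Lop_mult hfne hmd).2]
  exact hmlt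

lemma taylor_pow' (r : ℂ) (p : Polynomial ℂ) (n : ℕ) :
    taylor r (p ^ n) = (taylor r p) ^ n := by
  simpa using map_pow (taylorAlgHom r) p n

lemma taylor_dvd_iff (n : ℕ) (f : Polynomial ℂ) :
    (X + 1 : Polynomial ℂ) ^ n ∣ f ↔ X ^ n ∣ taylor (-1) f := by
  have hT : taylor (-1 : ℂ) (X + 1) = X := by
    rw [map_add, taylor_X, taylor_one]
    simp
  constructor
  · rintro ⟨h, rfl⟩
    exact ⟨taylor (-1) h, by rw [taylor_mul, taylor_pow', hT]⟩
  · rintro ⟨h, hh⟩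
    have hf : f = taylor 1 (taylor (-1 : ℂ) f) := by
      rw [taylor_taylor]
      norm_num
    rw [hf, hh, taylor_mul, taylor_pow', taylor_X]
    exact ⟨taylor 1 h, by rw [C_1]⟩

end TruncAux

open TruncAux

/-- Let `V` be the span of `P_{m_1;d}, …, P_{m_N;d}, (x+1)^d` where
`0 ≤ m_1 < … < m_N < d`.  Then the set of root multiplicities at `−1` of the
nonzero elements of `V` is exactly `{0, 1, …, N−1} ∪ {d}`. -/
theorem span_truncBinoms_orders_at_neg_one (N d : ℕ) (hN : 1 ≤ N)
    (m : Fin N → ℕ) (hmono : StrictMono m) (hlt : ∀ i, m i < d)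
    (V : Submodule ℂ (Polynomial ℂ))
    (hV : V = Submodule.span ℂ (Set.range
      (Fin.snoc (fun i : Fin N => truncBinom d (m i))
        ((Polynomial.X + 1) ^ d : Polynomial ℂ)))) :
    {k : ℕ | ∃ f ∈ V, f ≠ 0 ∧ Polynomial.rootMultiplicity (-1) f = k}
      = {k : ℕ | k < N} ∪ {d} := by
  have hd : 1 ≤ d := by have := hlt ⟨0, hN⟩; omega
  have hX1 : (X - C (-1 : ℂ)) = X + 1 := by rw [map_neg, C_1, sub_neg_eq_add]
  set P : Fin N → Polynomial ℂ := fun i => truncBinom d (m i) with hP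
  have hpowne : ((X + 1 : Polynomial ℂ)) ^ d ≠ 0 := by
    rw [← hX1]; exact pow_ne_zero _ (X_sub_C_ne_zero _)
  have hmultpow : rootMultiplicity (-1 : ℂ) ((X + 1 : Polynomial ℂ) ^ d) = d := by
    rw [← hX1, rootMultiplicity_X_sub_C_pow]
  have hdegpow : ((X + 1 : Polynomial ℂ) ^ d).degree ≤ (d : ℕ) := by
    rw [← hX1, degree_pow, degree_X_sub_C]
    simp
  -- upper bound
  have upper : ∀ f ∈ V, f ≠ 0 →
      rootMultiplicity (-1) f < N ∨ rootMultiplicity (-1) f = d := by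
    intro f hfV hf0
    rw [hV, Submodule.mem_span_range_iff_exists_fun] at hfV
    obtain ⟨c, hc⟩ := hfV
    rw [Fin.sum_univ_castSucc] at hc
    simp only [Fin.snoc_castSucc, Fin.snoc_last] at hc
    by_cases hc' : (fun i : Fin N => c i.castSucc) = 0
    · right
      have hsum0 : ∑ i : Fin N, c i.castSucc • truncBinom d (m i) = 0 :=
        Finset.sum_eq_zero fun i _ => by
          rw [show c i.castSucc = 0 from congrFun hc' i, zero_smul]
      have hfc : f = c (Fin.last N) • ((X + 1 : Polynomial ℂ) ^ d) := by
        rw [← hc, hsum0, zero_add]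
      have hcl : c (Fin.last N) ≠ 0 := by
        intro h
        exact hf0 (by rw [hfc, h, zero_smul])
      rw [hfc, smul_eq_C_mul,
        rootMultiplicity_mul (mul_ne_zero (fun h => hcl (by simpa using h)) hpowne),
        rootMultiplicity_C, zero_add, hmultpow]
    · left
      exact (key hd hmono hlt (c := fun i => c i.castSucc)
        (g := c (Fin.last N) • ((X + 1 : Polynomial ℂ) ^ d))
        (by rw [map_smul, Lop_pow, smul_zero])
        ((degree_smul_le _ _).trans hdegpow) hc.symm hc').2
  -- the span W of the truncated binomials
  have hWle : Submodule.span ℂ (Set.range P) ≤ V := by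
    rw [hV]
    apply Submodule.span_mono
    rintro x ⟨i, rfl⟩
    exact ⟨i.castSucc, Fin.snoc_castSucc _ _ i⟩
  have upperW : ∀ f ∈ Submodule.span ℂ (Set.range P), f ≠ 0 →
      rootMultiplicity (-1) f < N := by
    intro f hf hf0
    rw [Submodule.mem_span_range_iff_exists_fun] at hf
    obtain ⟨c, hc⟩ := hf
    have hc0 : c ≠ 0 := by
      intro h; apply hf0; rw [← hc, h]; simp
    exact (key hd hmono hlt (g := (0 : Polynomial ℂ)) (map_zero _) (by simp)
      (by rw [← hc]; simp [hP]) hc0).2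
  have li : LinearIndependent ℂ P := by
    rw [Fintype.linearIndependent_iff]
    intro c hcsum i
    by_contra hci
    have hc0 : c ≠ 0 := fun h => hci (congrFun h i)
    exact (key hd hmono hlt (g := (0 : Polynomial ℂ)) (map_zero _) (by simp)
      (f := 0) (by rw [add_zero]; exact hcsum.symm) hc0).1 rfl
  haveI : FiniteDimensional ℂ (Submodule.span ℂ (Set.range P)) :=
    FiniteDimensional.span_of_finite ℂ (Set.finite_range P)
  have hfr : Module.finrank ℂ (Submodule.span ℂ (Set.range P)) = N := by
    rw [finrank_span_eq_card li, Fintype.card_fin]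
  set T : Polynomial ℂ →ₗ[ℂ] (Fin N → ℂ) :=
    LinearMap.pi (fun j : Fin N => (lcoeff ℂ (j : ℕ)).comp (taylor (-1 : ℂ))) with hT
  set T' := T.domRestrict (Submodule.span ℂ (Set.range P)) with hT'
  have hTapp : ∀ (x : Submodule.span ℂ (Set.range P)) (j : Fin N),
      T' x j = (taylor (-1 : ℂ) (x : Polynomial ℂ)).coeff j := fun x j => rfl
  have hinj : Function.Injective T' := by
    rw [← LinearMap.ker_eq_bot, LinearMap.ker_eq_bot']
    intro x hx
    by_contra hx0
    have hxne : (x : Polynomial ℂ) ≠ 0 :=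
      fun h => hx0 (Subtype.ext h)
    have hlt' : rootMultiplicity (-1) (x : Polynomial ℂ) < N := upperW _ x.2 hxne
    have hdvd : (X + 1 : Polynomial ℂ) ^ N ∣ (x : Polynomial ℂ) := by
      rw [taylor_dvd_iff, X_pow_dvd_iff]
      intro t ht
      have := congrFun hx ⟨t, ht⟩
      rw [hTapp] at this
      simpa using this
    have : N ≤ rootMultiplicity (-1) (x : Polynomial ℂ) :=
      (le_rootMultiplicity_iff hxne).mpr (by rw [hX1]; exact hdvd)
    omega
  have hsurj : Function.Surjective T' :=
    (LinearMap.injective_iff_surjective_of_finrank_eq_finrank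
      (by rw [hfr, Module.finrank_fintype_fun_eq_card, Fintype.card_fin])).mp hinj
  have lower : ∀ k, k < N → ∃ f ∈ V, f ≠ 0 ∧ rootMultiplicity (-1) f = k := by
    intro k hk
    obtain ⟨x, hx⟩ := hsurj (Pi.single ⟨k, hk⟩ 1)
    have h1 : (taylor (-1 : ℂ) (x : Polynomial ℂ)).coeff k = 1 := by
      have := congrFun hx ⟨k, hk⟩
      rw [hTapp] at this
      simpa using this
    have hxne : (x : Polynomial ℂ) ≠ 0 := by
      intro h
      rw [h] at h1
      simp at h1
    refine ⟨x, hWle x.2, hxne, ?_⟩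
    refine le_antisymm ?_ ?_
    · rw [rootMultiplicity_le_iff hxne, hX1, taylor_dvd_iff, X_pow_dvd_iff]
      intro hdvd
      have := hdvd k (Nat.lt_succ_self k)
      rw [this] at h1
      exact one_ne_zero h1.symm
    · rw [le_rootMultiplicity_iff hxne, hX1, taylor_dvd_iff, X_pow_dvd_iff]
      intro t ht
      have := congrFun hx ⟨t, ht.trans hk⟩
      rw [hTapp] at this
      rw [this]
      exact Pi.single_eq_of_ne (by simp [Fin.ext_iff]; omega) 1
  ext k
  simp only [Set.mem_setOf_eq, Set.mem_union, Set.mem_singleton_iff]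
  constructor
  · rintro ⟨f, hfV, hf0, rfl⟩
    exact upper f hfV hf0
  · rintro (hk | hk)
    · exact lower k hk
    · refine ⟨(X + 1) ^ d, ?_, hpowne, hmultpow.trans hk.symm⟩
      rw [hV]
      exact Submodule.subset_span ⟨Fin.last N, by simp⟩
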